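/- Under the iterative construction of the sequences (k_i) and (b_i), assume in addition k_{i+1} ≤ 2·k_i for all i ≥ 2. Then the sequence of functions (b_i) converges pointwise to the constant function −1 on [1, +∞): for every x ≥ 1, b_i(x) → −1 as i → ∞. -/

import Mathlib

/-- Floor of `x / k` equals floor of `⌊x⌋ / k` for a positive natural `k`. -/
private lemma floor_div_floor (x : ℝ) (kk : ℕ) (hk : 0 < kk) :
    ⌊(⌊x⌋ : ℝ) / (kk : ℝ)⌋ = ⌊x / (kk : ℝ)⌋ := by
  have hkR : (0:ℝ) < (kk:ℝ) := by exact_mod_cast hk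
  rw [Int.floor_eq_iff (R := ℝ)]
  constructor
  · have h1 : (⌊x / (kk:ℝ)⌋ : ℝ) * kk ≤ x := by
      have := Int.floor_le (x / (kk:ℝ))
      calc (⌊x / (kk:ℝ)⌋ : ℝ) * kk ≤ (x / kk) * kk := by nlinarith
        _ = x := by field_simp
    have h2 : (⌊x / (kk:ℝ)⌋ * (kk:ℤ) : ℤ) ≤ ⌊x⌋ := by
      rw [Int.le_floor]; push_cast; exact h1
    have h2' : (⌊x / (kk:ℝ)⌋ : ℝ) * kk ≤ (⌊x⌋ : ℝ) := by exact_mod_cast h2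
    rw [le_div_iff₀ hkR]; exact h2'
  · have h1 : x < ((⌊x / (kk:ℝ)⌋ : ℝ) + 1) * kk := by
      have := Int.lt_floor_add_one (x / (kk:ℝ))
      calc x = (x / kk) * kk := by field_simp
        _ < ((⌊x / (kk:ℝ)⌋ : ℝ) + 1) * kk := by nlinarith
    have h2 : (⌊x⌋ : ℝ) ≤ x := Int.floor_le x
    rw [div_lt_iff₀ hkR]; push_cast; linarith

/-- `fract (x/k)` splits as `fract(⌊x⌋/k) + fract x / k`. -/
private lemma fract_div_split (x : ℝ) (kk : ℕ) (hk : 0 < kk) :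
    Int.fract (x / (kk : ℝ)) = Int.fract ((⌊x⌋ : ℝ) / (kk : ℝ)) + Int.fract x / (kk : ℝ) := by
  have hkR : ((kk:ℝ)) ≠ 0 := by positivity
  simp only [Int.fract]
  rw [floor_div_floor x kk hk]
  field_simp
  ring

/-- If moreover `k_{i+1} ≤ 2 k_i` for `i ≥ 2`, then `b_i → -1` pointwise on `[1, ∞)`. -/
theorem stmt_11 (k : ℕ → ℕ) (b : ℕ → ℝ → ℝ)
    (hk1 : k 1 = 1) (hk2 : k 2 = 2)
    (hb2 : ∀ x : ℝ, b 2 x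
      = Int.fract (x / (k 1 : ℝ)) - ((k 2 : ℝ) / (k 1 : ℝ)) * Int.fract (x / (k 2 : ℝ)))
    (hmono : ∀ i : ℕ, 2 ≤ i → k i < k (i + 1))
    (hne : ∀ i : ℕ, 2 ≤ i → b i ((k (i + 1) : ℝ)) ≠ b i ((k i : ℝ)))
    (hleast : ∀ i : ℕ, 2 ≤ i → ∀ m : ℕ, k i < m → m < k (i + 1) → b i (m : ℝ) = b i ((k i : ℝ)))
    (hbrec : ∀ i : ℕ, 2 ≤ i → ∀ x : ℝ, b (i + 1) x
      = b i x + (1 + b i ((k i : ℝ)))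
          * (Int.fract (x / (k i : ℝ))
            - ((k (i + 1) : ℝ) / (k i : ℝ)) * Int.fract (x / (k (i + 1) : ℝ))))
    (hgrow : ∀ i : ℕ, 2 ≤ i → k (i + 1) ≤ 2 * k i) :
    ∀ x : ℝ, 1 ≤ x → Filter.Tendsto (fun i : ℕ => b i x) Filter.atTop (nhds (-1)) := by
  -- k i ≥ i for i ≥ 2
  have hik : ∀ i : ℕ, 2 ≤ i → i ≤ k i := by
    intro i hi
    induction i, hi using Nat.le_induction with
    | base => omega
    | succ n hn ih => have := hmono n hn; omega
  have hkpos : ∀ i : ℕ, 2 ≤ i → 0 < k i := fun i hi => lt_of_lt_of_le (by omega) (hik i hi)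
  -- b i x depends only on ⌊x⌋
  have hQ : ∀ i : ℕ, 2 ≤ i → ∀ x : ℝ, b i x = b i ((⌊x⌋ : ℝ)) := by
    intro i hi
    induction i, hi using Nat.le_induction with
    | base =>
      intro x
      have h1 := fract_div_split x 1 (by norm_num)
      have h2 := fract_div_split x 2 (by norm_num)
      rw [hb2 x, hb2 ((⌊x⌋:ℝ)), hk1, hk2]
      push_cast at h1 h2 ⊢
      rw [h1, h2]
      ring
    | succ n hn ih =>
      intro x
      have hkn : (0:ℝ) < (k n : ℝ) := by exact_mod_cast hkpos n hn
      have hkn1 : (0:ℝ) < (k (n+1) : ℝ) := by exact_mod_cast hkpos (n+1) (by omega)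
      have h1 := fract_div_split x (k n) (hkpos n hn)
      have h2 := fract_div_split x (k (n+1)) (hkpos (n+1) (by omega))
      rw [hbrec n hn x, hbrec n hn ((⌊x⌋:ℝ)), ih x, h1, h2]
      field_simp
      ring
  -- b i x = -1 for 1 ≤ x < k i
  have hP : ∀ i : ℕ, 2 ≤ i → ∀ x : ℝ, 1 ≤ x → x < (k i : ℝ) → b i x = -1 := by
    intro i hi
    induction i, hi using Nat.le_induction with
    | base =>
      intro x hx1 hx2
      rw [hk2] at hx2
      have hfl : ⌊x⌋ = 1 := by
        rw [Int.floor_eq_iff]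
        push_cast at hx2 ⊢
        constructor <;> linarith
      rw [hQ 2 le_rfl x, hfl, hb2, hk1, hk2]
      push_cast
      have hf1 : Int.fract ((1:ℝ)/1) = 0 := by norm_num
      have hf2 : Int.fract ((1:ℝ)/2) = 1/2 := by
        rw [Int.fract_eq_self.2 (by norm_num)]
      rw [hf1, hf2]; norm_num
    | succ n hn ih =>
      intro x hx1 hx2
      have hkn : (0:ℝ) < (k n : ℝ) := by exact_mod_cast hkpos n hn
      have hkn1 : (0:ℝ) < (k (n+1) : ℝ) := by exact_mod_cast hkpos (n+1) (by omega)
      have hfl1 : (1:ℤ) ≤ ⌊x⌋ := by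
        rw [Int.le_floor]; exact_mod_cast hx1
      have hflx : (⌊x⌋:ℝ) ≤ x := Int.floor_le x
      have hfl2 : ⌊x⌋ < (k (n+1) : ℤ) := by
        have : (⌊x⌋:ℝ) < (k (n+1):ℝ) := lt_of_le_of_lt hflx hx2
        exact_mod_cast this
      rw [hQ (n+1) (by omega) x, hbrec n hn]
      set m : ℤ := ⌊x⌋ with hm
      by_cases hcase : m < (k n : ℤ)
      · -- ⌊x⌋ < k n : increment vanishes
        have hmr : (m:ℝ) < (k n : ℝ) := by exact_mod_cast hcase
        have hmr1 : (m:ℝ) < (k (n+1) : ℝ) := by exact_mod_cast hfl2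
        have hm0 : (0:ℝ) ≤ (m:ℝ) := by exact_mod_cast (by omega : (0:ℤ) ≤ m)
        have hfr1 : Int.fract ((m:ℝ) / (k n : ℝ)) = (m:ℝ) / (k n : ℝ) :=
          Int.fract_eq_self.2 ⟨by positivity, by rw [div_lt_one hkn]; exact hmr⟩
        have hfr2 : Int.fract ((m:ℝ) / (k (n+1) : ℝ)) = (m:ℝ) / (k (n+1) : ℝ) :=
          Int.fract_eq_self.2 ⟨by positivity, by rw [div_lt_one hkn1]; exact hmr1⟩
        rw [hfr1, hfr2]
        have hbn : b n ((m:ℝ)) = -1 := ih ((m:ℝ)) (by exact_mod_cast hfl1) hmr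
        rw [hbn]
        field_simp
        ring
      · -- k n ≤ ⌊x⌋ < k (n+1) ≤ 2 k n
        push_neg at hcase
        have hgr := hgrow n hn
        have hmr : (k n : ℝ) ≤ (m:ℝ) := by exact_mod_cast hcase
        have hmr1 : (m:ℝ) < (k (n+1) : ℝ) := by exact_mod_cast hfl2
        have hmr2 : (m:ℝ) < 2 * (k n : ℝ) := by
          have : ((k (n+1):ℝ)) ≤ 2 * (k n : ℝ) := by exact_mod_cast hgr
          linarith
        have hfr1 : Int.fract ((m:ℝ) / (k n : ℝ)) = (m:ℝ) / (k n : ℝ) - 1 := by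
          rw [Int.fract]
          have : ⌊(m:ℝ) / (k n : ℝ)⌋ = 1 := by
            rw [Int.floor_eq_iff]
            constructor
            · push_cast; rw [le_div_iff₀ hkn]; linarith
            · push_cast; rw [div_lt_iff₀ hkn]; linarith
          rw [this]; push_cast; ring
        have hfr2 : Int.fract ((m:ℝ) / (k (n+1) : ℝ)) = (m:ℝ) / (k (n+1) : ℝ) :=
          Int.fract_eq_self.2 ⟨by positivity, by rw [div_lt_one hkn1]; exact hmr1⟩
        have hbn : b n ((m:ℝ)) = b n ((k n : ℝ)) := by
          rcases eq_or_lt_of_le hcase with heq | hlt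
          · have hmk : (m:ℝ) = ((k n : ℕ):ℝ) := by exact_mod_cast heq.symm
            rw [hmk]
          · have hm0 : 0 ≤ m := by omega
            have := hleast n hn m.toNat
              (by omega) (by omega)
            have hcast : ((m.toNat : ℕ) : ℝ) = (m:ℝ) := by
              exact_mod_cast Int.toNat_of_nonneg hm0
            rwa [hcast] at this
        rw [hfr1, hfr2, hbn]
        field_simp
        ring
  -- conclusion
  intro x hx
  have hev : (fun _ : ℕ => (-1:ℝ)) =ᶠ[Filter.atTop] fun i => b i x := by
    have hN : ∃ N : ℕ, 2 ≤ N ∧ x < (N:ℝ) := by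
      obtain ⟨N, hN⟩ := exists_nat_gt x
      exact ⟨max 2 N, le_max_left _ _, lt_of_lt_of_le hN (by exact_mod_cast le_max_right 2 N)⟩
    obtain ⟨N, hN2, hNx⟩ := hN
    filter_upwards [Filter.eventually_ge_atTop N] with i hi
    have hi2 : 2 ≤ i := le_trans hN2 hi
    have hxi : x < (k i : ℝ) := by
      have h1 : (N:ℝ) ≤ (i:ℝ) := by exact_mod_cast hi
      have h2 : (i:ℝ) ≤ (k i : ℝ) := by exact_mod_cast hik i hi2
      linarith
    exact (hP i hi2 x hx hxi).symm
  exact Filter.Tendsto.congr' hev tendsto_const_nhds
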